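/- arXiv:2503.00608 — 2 statements merged into one kernel-verified Lean document; each statement's English description precedes it below -/
import Mathlib

section
/- Let W = softmax(QKᵀ) where Q, K ∈ ℝ^{n×d}, i.e., W_{ij} = exp(qᵢ·kⱼ)/Σ_{s=1}^n exp(qᵢ·k_s) with qᵢ, kⱼ the rows of Q and K. Suppose [n] is partitioned into sets I₁,...,I_ℓ such that whenever i, i' lie in the same part, ‖qᵢ - q_{i'}‖₂ ≤ δ and ‖kᵢ - k_{i'}‖₂ ≤ δ, and let R = max(max_i ‖qᵢ‖₂, max_j ‖kⱼ‖₂). If 4δR ≤ 1/35, then for any i, i' in the same part and j, j' in the same part, |W_{ij}/W_{i'j'} - 1| ≤ 17δR. -/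
/-- Let `W = softmax(QKᵀ)` with rows `qᵢ`, `kⱼ`. If `[n]` is partitioned so that
indices in the same part have query (resp. key) rows within distance `δ`, all rows
have norm at most `R`, and `4δR ≤ 1/35`, then for `i, i'` in the same part and
`j, j'` in the same part, `|W_{ij}/W_{i'j'} - 1| ≤ 17δR`. -/
theorem stmt7 (n d ℓ : ℕ) (q k : Fin n → EuclideanSpace ℝ (Fin d))
    (part : Fin n → Fin ℓ) (δ R : ℝ) (hδ : 0 ≤ δ)
    (hqR : ∀ i, ‖q i‖ ≤ R) (hkR : ∀ j, ‖k j‖ ≤ R)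
    (hqpart : ∀ i i', part i = part i' → ‖q i - q i'‖ ≤ δ)
    (hkpart : ∀ j j', part j = part j' → ‖k j - k j'‖ ≤ δ)
    (hsmall : 4 * δ * R ≤ 1 / 35)
    (W : Fin n → Fin n → ℝ)
    (hW : ∀ i j, W i j =
      Real.exp (inner ℝ (q i) (k j) : ℝ) / ∑ s, Real.exp (inner ℝ (q i) (k s) : ℝ)) :
    ∀ i i' j j', part i = part i' → part j = part j' →
      |W i j / W i' j' - 1| ≤ 17 * δ * R := by
  intro i i' j j' hii hjj
  have hR0 : (0:ℝ) ≤ R := le_trans (norm_nonneg _) (hqR i)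
  set c := δ * R with hcdef
  have hc0 : 0 ≤ c := mul_nonneg hδ hR0
  have hc140 : c ≤ 1 / 140 := by rw [hcdef]; linarith
  -- key inner product inequality
  have key : ∀ (a b s : EuclideanSpace ℝ (Fin d)), ‖a - b‖ ≤ δ → ‖s‖ ≤ R →
      (inner ℝ a s : ℝ) ≤ (inner ℝ b s : ℝ) + c := by
    intro a b s hab hs
    have h1 : |(inner ℝ (a - b) s : ℝ)| ≤ ‖a - b‖ * ‖s‖ := abs_real_inner_le_norm _ _
    have h2 : ‖a - b‖ * ‖s‖ ≤ δ * R :=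
      mul_le_mul hab hs (norm_nonneg _) hδ
    have h3 : (inner ℝ (a - b) s : ℝ) = inner ℝ a s - inner ℝ b s := inner_sub_left _ _ _
    have := abs_le.mp h1
    rw [h3] at this
    linarith [this.2]
  set a : ℝ := inner ℝ (q i) (k j) with ha
  set a' : ℝ := inner ℝ (q i') (k j') with ha'
  -- |a - a'| ≤ 2c
  have haa' : a ≤ a' + 2 * c := by
    have h1 : (inner ℝ (q i) (k j) : ℝ) ≤ inner ℝ (q i') (k j) + c :=
      key _ _ _ (hqpart i i' hii) (hkR j)
    have h2 : (inner ℝ (k j) (q i') : ℝ) ≤ inner ℝ (k j') (q i') + c :=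
      key _ _ _ (hkpart j j' hjj) (hqR i')
    have e1 : (inner ℝ (k j) (q i') : ℝ) = inner ℝ (q i') (k j) := real_inner_comm _ _
    have e2 : (inner ℝ (k j') (q i') : ℝ) = inner ℝ (q i') (k j') := real_inner_comm _ _
    rw [ha, ha']; linarith
  have ha'a : a' ≤ a + 2 * c := by
    have h1 : (inner ℝ (q i') (k j') : ℝ) ≤ inner ℝ (q i) (k j') + c :=
      key _ _ _ (hqpart i' i hii.symm) (hkR j')
    have h2 : (inner ℝ (k j') (q i) : ℝ) ≤ inner ℝ (k j) (q i) + c :=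
      key _ _ _ (hkpart j' j hjj.symm) (hqR i)
    have e1 : (inner ℝ (k j') (q i) : ℝ) = inner ℝ (q i) (k j') := real_inner_comm _ _
    have e2 : (inner ℝ (k j) (q i) : ℝ) = inner ℝ (q i) (k j) := real_inner_comm _ _
    rw [ha, ha']; linarith
  set S : Fin n → ℝ := fun t => ∑ s, Real.exp (inner ℝ (q t) (k s) : ℝ) with hS
  have hSpos : ∀ t, 0 < S t := by
    intro t
    apply Finset.sum_pos (fun s _ => Real.exp_pos _)
    exact ⟨i, Finset.mem_univ i⟩
  have hSsum : ∀ t t', part t = part t' → S t' ≤ Real.exp c * S t := by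
    intro t t' htt
    rw [hS, Finset.mul_sum]
    apply Finset.sum_le_sum
    intro s _
    rw [← Real.exp_add]
    apply Real.exp_le_exp.mpr
    have := key (q t') (q t) (k s) (hqpart t' t htt.symm) (hkR s)
    linarith
  have hS1 : S i' ≤ Real.exp c * S i := hSsum i i' hii
  have hS2 : S i ≤ Real.exp c * S i' := hSsum i' i hii.symm
  have e3 : Real.exp (2 * c) * Real.exp c = Real.exp (3 * c) := by
    rw [← Real.exp_add]; ring_nf
  -- product inequalities
  have hupper' : Real.exp a * S i' ≤ Real.exp (3 * c) * (Real.exp a' * S i) := by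
    have h1 : Real.exp a ≤ Real.exp a' * Real.exp (2 * c) := by
      rw [← Real.exp_add]; exact Real.exp_le_exp.mpr haa'
    calc Real.exp a * S i' ≤ (Real.exp a' * Real.exp (2 * c)) * (Real.exp c * S i) :=
          mul_le_mul h1 hS1 (hSpos i').le
            (mul_nonneg (Real.exp_pos _).le (Real.exp_pos _).le)
      _ = Real.exp (3 * c) * (Real.exp a' * S i) := by rw [← e3]; ring
  have hlower' : Real.exp a' * S i ≤ Real.exp (3 * c) * (Real.exp a * S i') := by
    have h1 : Real.exp a' ≤ Real.exp a * Real.exp (2 * c) := by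
      rw [← Real.exp_add]; exact Real.exp_le_exp.mpr ha'a
    calc Real.exp a' * S i ≤ (Real.exp a * Real.exp (2 * c)) * (Real.exp c * S i') :=
          mul_le_mul h1 hS2 (hSpos i).le
            (mul_nonneg (Real.exp_pos _).le (Real.exp_pos _).le)
      _ = Real.exp (3 * c) * (Real.exp a * S i') := by rw [← e3]; ring
  -- the ratio
  have hWij : W i j = Real.exp a / S i := hW i j
  have hWi'j' : W i' j' = Real.exp a' / S i' := hW i' j'
  have hden : 0 < Real.exp a' * S i := mul_pos (Real.exp_pos _) (hSpos i)
  have hratio : W i j / W i' j' = Real.exp a * S i' / (Real.exp a' * S i) := by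
    rw [hWij, hWi'j']
    rw [div_div_div_eq, mul_comm (S i) (Real.exp a')]
  have hub : W i j / W i' j' ≤ Real.exp (3 * c) := by
    rw [hratio, div_le_iff₀ hden]; exact hupper'
  have hlb : Real.exp (-(3 * c)) ≤ W i j / W i' j' := by
    rw [hratio, le_div_iff₀ hden]
    have h4 : Real.exp (-(3 * c)) * Real.exp (3 * c) = 1 := by
      rw [← Real.exp_add]; simp
    calc Real.exp (-(3 * c)) * (Real.exp a' * S i)
        ≤ Real.exp (-(3 * c)) * (Real.exp (3 * c) * (Real.exp a * S i')) :=
          mul_le_mul_of_nonneg_left hlower' (Real.exp_pos _).le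
      _ = Real.exp a * S i' := by rw [← mul_assoc, h4, one_mul]
  -- numeric bounds on exp(±3c)
  have hexp_lb : 1 - 3 * c ≤ Real.exp (-(3 * c)) := by
    have := Real.add_one_le_exp (-(3 * c)); linarith
  have hexp_ub : Real.exp (3 * c) ≤ 1 + 17 * c := by
    have h2 : Real.exp (3 * c) * Real.exp (-(3 * c)) = 1 := by
      rw [← Real.exp_add]; simp
    have hE : 0 < Real.exp (3 * c) := Real.exp_pos _
    have h5 : Real.exp (3 * c) * (1 - 3 * c) ≤ 1 := by
      calc Real.exp (3 * c) * (1 - 3 * c)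
          ≤ Real.exp (3 * c) * Real.exp (-(3 * c)) :=
            mul_le_mul_of_nonneg_left hexp_lb hE.le
        _ = 1 := h2
    have h6 : (0:ℝ) < 1 - 3 * c := by linarith
    nlinarith [h5, h6, hE, hc0, hc140]
  have h17 : 17 * δ * R = 17 * c := by rw [hcdef]; ring
  rw [h17, abs_le]
  constructor
  · have h := le_trans hexp_lb hlb
    linarith
  · have h := le_trans hub hexp_ub
    linarith
end

section
/- Let W = softmax(QKᵀ) with Q, K ∈ ℝ^{n×d}, and fix representatives i₁ ∈ I₁, ..., i_ℓ ∈ I_ℓ of a partition of [n]. Define W' ∈ ℝ^{n×n} by W'_{ij} = exp(q_{m}·k_{m'})/Σ_s exp(q_m·k_s) where i ∈ I_m and j ∈ I_{m'} (using representatives' rows q_m, k_{m'} appropriately as in a rank-one-per-pair construction). Then W' has non-negative rank at most ℓ(ℓ+1)/2; concretely, W' = AB^⊤ for explicit entrywise-nonnegative matrices A, B ∈ ℝ_{≥0}^{n × ℓ(ℓ+1)/2}. -/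
/-- Fix a partition of `[n]` with representatives `rep m ∈ I_m`, and define
`W'_{ij} = exp(q_m · k_{m'}) / Σ_s exp(q_m · k_s)` where `m, m'` are the parts of
`i, j` (using the representatives' rows). Then `W'` has non-negative rank at most
`ℓ(ℓ+1)/2`: concretely `W' = A Bᵀ` for entrywise-nonnegative
`A, B ∈ ℝ_{≥0}^{n × ℓ(ℓ+1)/2}`. -/
theorem stmt8 (n d ℓ : ℕ) (q k : Fin n → EuclideanSpace ℝ (Fin d))
    (part : Fin n → Fin ℓ) (rep : Fin ℓ → Fin n) (hrep : ∀ m, part (rep m) = m)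
    (W' : Matrix (Fin n) (Fin n) ℝ)
    (hW' : ∀ i j, W' i j =
      Real.exp (inner ℝ (q (rep (part i))) (k (rep (part j))) : ℝ) /
        ∑ s, Real.exp (inner ℝ (q (rep (part i))) (k s) : ℝ)) :
    ∃ A B : Matrix (Fin n) (Fin (ℓ * (ℓ + 1) / 2)) ℝ,
      (∀ i r, 0 ≤ A i r) ∧ (∀ j r, 0 ≤ B j r) ∧ W' = A * B.transpose := by
  refine ⟨fun i r => if (r : ℕ) = (part i : ℕ) then 1 else 0,
    fun j r => if h : (r : ℕ) < ℓ then
      Real.exp (inner ℝ (q (rep ⟨r, h⟩)) (k (rep (part j))) : ℝ) /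
        ∑ s, Real.exp (inner ℝ (q (rep ⟨r, h⟩)) (k s) : ℝ) else 0, ?_, ?_, ?_⟩
  · intro i r
    dsimp only
    split <;> norm_num
  · intro j r
    dsimp only
    split
    · apply div_nonneg (Real.exp_nonneg _)
      exact Finset.sum_nonneg fun s _ => Real.exp_nonneg _
    · exact le_refl 0
  · ext i j
    by_cases hn : n = 0
    · exact absurd i.2 (by omega)
    have hℓ : 0 < ℓ := (part i).pos
    have hle : ℓ ≤ ℓ * (ℓ + 1) / 2 := by
      rw [Nat.le_div_iff_mul_le (by norm_num)]
      nlinarith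
    have hp : ((part i : ℕ) : ℕ) < ℓ * (ℓ + 1) / 2 := lt_of_lt_of_le (part i).2 hle
    change W' i j = ∑ r : Fin (ℓ * (ℓ + 1) / 2), _ * _
    simp only [Matrix.transpose, Matrix.of_apply]
    rw [Finset.sum_eq_single (⟨(part i : ℕ), hp⟩ : Fin (ℓ * (ℓ + 1) / 2))]
    · rw [hW']
      simp
    · intro b _ hb
      rw [if_neg, zero_mul]
      intro hc
      exact hb (by ext; exact hc)
    · intro h
      exact absurd (Finset.mem_univ _) h
end
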